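/- If d divides both p and q, then in H(p,q,d) any two vertices either have identical out-neighbor sets or disjoint out-neighbor sets; specifically, vertices with coordinates (t,s) and (t',s') (where vertex index i = t·(q/d)+s) have the same out-neighbor set if and only if s=s' and ⌊(p-1-t)/d⌋ = ⌊(p-1-t')/d⌋. -/
import Mathlib


/-- The OTIS transpose map: for a = iq+j (0 ≤ i < p, 0 ≤ j < q), tau a = (q-1-j)p + (p-1-i). -/
def tau (p q a : ℕ) : ℕ := (q - 1 - a % q) * p + (p - 1 - a / q)

/-- Arc multiplicity from vertex u to vertex v in H(p,q,d). -/
def mult (p q d u v : ℕ) : ℕ :=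
  ((Finset.range d).filter (fun r => tau p q (d * u + r) / d = v)).card

/-- There is an arc from u to v in H(p,q,d). -/
def arc (p q d u v : ℕ) : Prop := ∃ r < d, tau p q (d * u + r) / d = v

lemma tau_div (p q d : ℕ) (hd : 0 < d) (hdp : d ∣ p) (hdq : d ∣ q)
    (t s r : ℕ) (hs : s < q / d) (hr : r < d) :
    tau p q (d * (t * (q / d) + s) + r) / d
      = (q - 1 - d * s - r) * (p / d) + (p - 1 - t) / d := by
  obtain ⟨m, hm⟩ := hdp
  obtain ⟨n, hn⟩ := hdq
  have hqd : q / d = n := by rw [hn, Nat.mul_div_cancel_left n hd]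
  have hsn : s < n := hqd ▸ hs
  have hjq : d * s + r < q := by
    have h1 : d * (s + 1) ≤ d * n := Nat.mul_le_mul_left d hsn
    have h2 : d * (s + 1) = d * s + d := by ring
    omega
  have ha : d * (t * (q / d) + s) + r = (d * s + r) + t * q := by
    rw [hqd, hn]; ring
  rw [ha]
  have hmod : ((d * s + r) + t * q) % q = d * s + r := by
    rw [Nat.add_mul_mod_self_right, Nat.mod_eq_of_lt hjq]
  have hdiv : ((d * s + r) + t * q) / q = t := by
    rw [Nat.add_mul_div_right _ _ (by omega : 0 < q), Nat.div_eq_of_lt hjq, Nat.zero_add]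
  unfold tau
  rw [hmod, hdiv]
  have hpd : p / d = m := by rw [hm, Nat.mul_div_cancel_left m hd]
  have key : (q - 1 - (d * s + r)) * p + (p - 1 - t)
      = d * ((q - 1 - (d * s + r)) * m) + (p - 1 - t) := by
    rw [hm]; ring
  rw [key, Nat.mul_add_div hd, hpd]
  congr 2
  omega

lemma arc_set_eq (p q d : ℕ) (hd : 0 < d) (hdp : d ∣ p) (hdq : d ∣ q)
    (t s : ℕ) (hs : s < q / d) :
    {v | arc p q d (t * (q / d) + s) v}
      = {v | ∃ r < d, v = (q - 1 - d * s - r) * (p / d) + (p - 1 - t) / d} := by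
  ext v
  simp only [Set.mem_setOf_eq, arc]
  constructor
  · rintro ⟨r, hr, htau⟩
    exact ⟨r, hr, htau.symm.trans (tau_div p q d hd hdp hdq t s r hs hr)⟩
  · rintro ⟨r, hr, hv⟩
    exact ⟨r, hr, (tau_div p q d hd hdp hdq t s r hs hr).trans hv.symm⟩

/-- A common element of the two arc sets forces s = s' and equal c values. -/
lemma common_elem (p q d : ℕ) (hd : 0 < d) (hdp : d ∣ p) (hdq : d ∣ q)
    (t s t' s' : ℕ) (ht : t < p) (hs : s < q / d) (ht' : t' < p) (hs' : s' < q / d)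
    (r r' : ℕ) (hr : r < d) (hr' : r' < d)
    (h : (q - 1 - d * s - r) * (p / d) + (p - 1 - t) / d
        = (q - 1 - d * s' - r') * (p / d) + (p - 1 - t') / d) :
    s = s' ∧ (p - 1 - t) / d = (p - 1 - t') / d := by
  obtain ⟨m, hm⟩ := hdp
  obtain ⟨n, hn⟩ := hdq
  have hpd : p / d = m := by rw [hm, Nat.mul_div_cancel_left m hd]
  have hqd : q / d = n := by rw [hn, Nat.mul_div_cancel_left n hd]
  have hm0 : 0 < m := by
    rcases Nat.eq_zero_or_pos m with h0 | h0
    · subst h0; simp only [Nat.mul_zero] at hm; omega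
    · exact h0
  have hc : (p - 1 - t) / d < m := Nat.div_lt_of_lt_mul (by omega)
  have hc' : (p - 1 - t') / d < m := Nat.div_lt_of_lt_mul (by omega)
  rw [hpd] at h
  -- uniqueness of representation e*m + c with c < m : take mod and div by m
  have hdivfun : ∀ e c : ℕ, c < m → (e * m + c) / m = e := by
    intro e c hcm
    rw [Nat.add_comm, Nat.add_mul_div_right _ _ hm0, Nat.div_eq_of_lt hcm, Nat.zero_add]
  have hmodeq : (p - 1 - t) / d = (p - 1 - t') / d := by
    have := congrArg (· % m) h
    simpa [Nat.mul_add_mod', Nat.mod_eq_of_lt hc, Nat.mod_eq_of_lt hc'] using this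
  have hdiveq : q - 1 - d * s - r = q - 1 - d * s' - r' := by
    have := congrArg (· / m) h
    simpa only [hdivfun _ _ hc, hdivfun _ _ hc'] using this
  refine ⟨?_, hmodeq⟩
  -- from hdiveq : q - 1 - d*s - r = q - 1 - d*s' - r' deduce d*s + r = d*s' + r'
  have hsn : s < n := hqd ▸ hs
  have hsn' : s' < n := hqd ▸ hs'
  have h1 : d * (s + 1) ≤ d * n := Nat.mul_le_mul_left d hsn
  have h1' : d * (s' + 1) ≤ d * n := Nat.mul_le_mul_left d hsn'
  have h2 : d * (s + 1) = d * s + d := by ring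
  have h2' : d * (s' + 1) = d * s' + d := by ring
  have heq : d * s + r = d * s' + r' := by omega
  have := congrArg (· / d) heq
  simpa [Nat.mul_add_div hd, Nat.div_eq_of_lt hr, Nat.div_eq_of_lt hr'] using this

theorem stmt_10 (p q d : ℕ) (hd : 0 < d) (hdp : d ∣ p) (hdq : d ∣ q)
    (t s t' s' : ℕ) (ht : t < p) (hs : s < q / d) (ht' : t' < p) (hs' : s' < q / d)
    (u u' : ℕ) (hu : u = t * (q / d) + s) (hu' : u' = t' * (q / d) + s') :
    ({v | arc p q d u v} = {v | arc p q d u' v}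
        ↔ s = s' ∧ (p - 1 - t) / d = (p - 1 - t') / d) ∧
    ({v | arc p q d u v} = {v | arc p q d u' v}
        ∨ Disjoint {v | arc p q d u v} {v | arc p q d u' v}) := by
  subst hu hu'
  rw [arc_set_eq p q d hd hdp hdq t s hs, arc_set_eq p q d hd hdp hdq t' s' hs']
  have main : ∀ v, v ∈ {v | ∃ r < d, v = (q - 1 - d * s - r) * (p / d) + (p - 1 - t) / d}
      → v ∈ {v | ∃ r < d, v = (q - 1 - d * s' - r) * (p / d) + (p - 1 - t') / d}
      → s = s' ∧ (p - 1 - t) / d = (p - 1 - t') / d := by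
    rintro v ⟨r, hr, rfl⟩ ⟨r', hr', hv⟩
    exact common_elem p q d hd hdp hdq t s t' s' ht hs ht' hs' r r' hr hr' hv
  have bwd : s = s' ∧ (p - 1 - t) / d = (p - 1 - t') / d →
      {v | ∃ r < d, v = (q - 1 - d * s - r) * (p / d) + (p - 1 - t) / d}
        = {v | ∃ r < d, v = (q - 1 - d * s' - r) * (p / d) + (p - 1 - t') / d} := by
    rintro ⟨rfl, hcc⟩
    ext v
    simp only [Set.mem_setOf_eq, hcc]
  constructor
  · constructor
    · intro hset
      have hmem : ((q - 1 - d * s - 0) * (p / d) + (p - 1 - t) / d)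
          ∈ {v | ∃ r < d, v = (q - 1 - d * s - r) * (p / d) + (p - 1 - t) / d} :=
        ⟨0, hd, rfl⟩
      exact main _ hmem (hset ▸ hmem)
    · exact bwd
  · by_cases hdis : Disjoint {v | ∃ r < d, v = (q - 1 - d * s - r) * (p / d) + (p - 1 - t) / d}
      {v | ∃ r < d, v = (q - 1 - d * s' - r) * (p / d) + (p - 1 - t') / d}
    · exact Or.inr hdis
    · left
      obtain ⟨v, hv1, hv2⟩ := Set.not_disjoint_iff.mp hdis
      exact bwd (main v hv1 hv2)
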